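/- Let (G,ν) be a connected deformation graph with common vertex rank r > 0, and let F be a field whose characteristic is either 0 or a prime that does not divide r. Then for every gradation f on G, the chain complex over F with C_k the F-vector space with basis the vertices v with f(v) = k and differential d(v) = Σ_{f(w)=f(v)−1} ν(v,w)·w is exact, i.e., H_k = 0 for all k; likewise the dual cochain complex with δ(v) = Σ_{f(w)=f(v)+1} ν(v,w)·w satisfies H^k = 0 for all k. -/

import Mathlib

/-- A gradation on a simple graph: adjacent vertices have values differing by ±1. -/
def IsGradation {V : Type*} (G : SimpleGraph V) (f : V → ℤ) : Prop :=
  ∀ ⦃a b : V⦄, G.Adj a b → f a - f b = 1 ∨ f a - f b = -1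

/-- A connection on a graph: a symmetric integer function nonzero exactly on edges. -/
def IsConnection {V : Type*} (G : SimpleGraph V) (ν : V → V → ℤ) : Prop :=
  (∀ a b : V, ν a b = ν b a) ∧ ∀ a b : V, ν a b ≠ 0 ↔ G.Adj a b

/-- A deformable connection: `∑_c ν a c * ν c b = 0` for all vertices at distance 2. -/
def IsDeformable {V : Type*} [Fintype V] (G : SimpleGraph V) (ν : V → V → ℤ) : Prop :=
  ∀ a b : V, G.dist a b = 2 → (∑ c : V, ν a c * ν c b) = 0

/-- The differential over a field `F`: the linear map from the `F`-vector space on the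
level-`j` vertices to the one on the level-`k` vertices, `v ↦ ∑_w ν v w • w`. -/
noncomputable def dmapF (F : Type*) [Field F] {V : Type*} [Fintype V] [DecidableEq V]
    (f : V → ℤ) (ν : V → V → ℤ) (j k : ℤ) :
    ({v : V // f v = j} → F) →ₗ[F] ({v : V // f v = k} → F) :=
  Matrix.toLin' (Matrix.of fun (w : {v : V // f v = k}) (v : {v : V // f v = j}) =>
    (ν v.1 w.1 : F))

/-- The `k`-th homology of the chain complex over `F` associated to `(f, ν)`. -/
noncomputable abbrev HkF (F : Type*) [Field F] {V : Type*} [Fintype V] [DecidableEq V]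
    (f : V → ℤ) (ν : V → V → ℤ) (k : ℤ) :=
  LinearMap.ker (dmapF F f ν k (k - 1)) ⧸
    ((LinearMap.range (dmapF F f ν (k + 1) k)).comap
      (LinearMap.ker (dmapF F f ν k (k - 1))).subtype)

/-- The `k`-th cohomology of the cochain complex over `F` associated to `(f, ν)`. -/
noncomputable abbrev coHkF (F : Type*) [Field F] {V : Type*} [Fintype V] [DecidableEq V]
    (f : V → ℤ) (ν : V → V → ℤ) (k : ℤ) :=
  LinearMap.ker (dmapF F f ν k (k + 1)) ⧸
    ((LinearMap.range (dmapF F f ν (k - 1) k)).comap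
      (LinearMap.ker (dmapF F f ν k (k + 1))).subtype)

private lemma dg_core {V : Type*} [Fintype V] [DecidableEq V] (G : SimpleGraph V)
    (ν : V → V → ℤ) (hcon : IsConnection G ν) (hdef : IsDeformable G ν)
    (hconn : G.Connected) (r : ℕ) (hrank : ∀ v : V, (∑ w : V, ν w v ^ 2) = (r : ℤ))
    (f : V → ℤ) (hf : IsGradation G f) (v w : V) (hvw : f v = f w) :
    (∑ u : V, ν v u * ν u w) = if v = w then (r : ℤ) else 0 := by
  split_ifs with h
  · subst h
    rw [← hrank v]
    refine Finset.sum_congr rfl fun u _ => ?_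
    rw [hcon.1 v u]; ring
  · by_cases hc : ∃ u : V, ν v u ≠ 0 ∧ ν u w ≠ 0
    · obtain ⟨u, h1, h2⟩ := hc
      have hadj1 : G.Adj v u := (hcon.2 v u).mp h1
      have hadj2 : G.Adj u w := (hcon.2 u w).mp h2
      have hna : ¬ G.Adj v w := by
        intro ha
        rcases hf ha with h' | h' <;> omega
      have hdist : G.dist v w = 2 := by
        have hle : G.dist v w ≤ 2 := SimpleGraph.dist_le
          (SimpleGraph.Walk.cons hadj1 (SimpleGraph.Walk.cons hadj2 SimpleGraph.Walk.nil))
        have h0 : 0 < G.dist v w := hconn.pos_dist_of_ne h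
        have h1' : G.dist v w ≠ 1 := fun hh => hna (SimpleGraph.dist_eq_one_iff_adj.mp hh)
        omega
      exact hdef v w hdist
    · push_neg at hc
      refine Finset.sum_eq_zero fun u _ => ?_
      by_cases h1 : ν v u = 0
      · rw [h1, zero_mul]
      · rw [hc u h1, mul_zero]

private lemma dg_split {V : Type*} [Fintype V] [DecidableEq V] (G : SimpleGraph V)
    (ν : V → V → ℤ) (hcon : IsConnection G ν) (f : V → ℤ) (hf : IsGradation G f)
    (k : ℤ) (v : V) (hv : f v = k) (g : V → ℤ) (hg : ∀ u, g u ≠ 0 → ν v u ≠ 0) :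
    (∑ u : {u : V // f u = k - 1}, g u.1) + (∑ u : {u : V // f u = k + 1}, g u.1)
      = ∑ u : V, g u := by
  rw [← Finset.sum_subtype (Finset.univ.filter (fun u => f u = k - 1))
        (fun u => by simp) g,
      ← Finset.sum_subtype (Finset.univ.filter (fun u => f u = k + 1))
        (fun u => by simp) g,
      ← Finset.sum_union (by
        simp only [Finset.disjoint_filter]
        intro x _ h1 h2
        omega)]
  apply Finset.sum_subset (Finset.subset_univ _)
  intro u _ hu
  by_contra hne
  have h1 : ν v u ≠ 0 := hg u hne
  have hadj : G.Adj v u := (hcon.2 v u).mp h1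
  have := hf hadj
  simp only [Finset.mem_union, Finset.mem_filter, Finset.mem_univ, true_and] at hu
  push_neg at hu
  omega

private lemma dg_key {V : Type*} [Fintype V] [DecidableEq V] (G : SimpleGraph V)
    (ν : V → V → ℤ) (hcon : IsConnection G ν) (hdef : IsDeformable G ν)
    (hconn : G.Connected) (r : ℕ) (hrank : ∀ v : V, (∑ w : V, ν w v ^ 2) = (r : ℤ))
    (F : Type*) [Field F] (f : V → ℤ) (hf : IsGradation G f) (k : ℤ) :
    (dmapF F f ν (k - 1) k).comp (dmapF F f ν k (k - 1))
      + (dmapF F f ν (k + 1) k).comp (dmapF F f ν k (k + 1))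
      = (r : F) • LinearMap.id := by
  unfold dmapF
  rw [← Matrix.toLin'_mul, ← Matrix.toLin'_mul, ← map_add, ← Matrix.toLin'_one (R := F),
    ← map_smul]
  congr 1
  ext w v
  simp only [Matrix.add_apply, Matrix.mul_apply, Matrix.of_apply, Matrix.smul_apply,
    Matrix.one_apply, smul_eq_mul]
  have hcast1 : (∑ u : {u : V // f u = k - 1}, (ν u.1 w.1 : F) * (ν v.1 u.1 : F))
      = ((∑ u : {u : V // f u = k - 1}, ν v.1 u.1 * ν u.1 w.1 : ℤ) : F) := by
    push_cast
    exact Finset.sum_congr rfl fun u _ => by ring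
  have hcast2 : (∑ u : {u : V // f u = k + 1}, (ν u.1 w.1 : F) * (ν v.1 u.1 : F))
      = ((∑ u : {u : V // f u = k + 1}, ν v.1 u.1 * ν u.1 w.1 : ℤ) : F) := by
    push_cast
    exact Finset.sum_congr rfl fun u _ => by ring
  rw [hcast1, hcast2, ← Int.cast_add,
    dg_split G ν hcon f hf k v.1 v.2 (fun u => ν v.1 u * ν u w.1)
      (fun u hu => fun h0 => hu (by rw [h0, zero_mul])),
    dg_core G ν hcon hdef hconn r hrank f hf v.1 w.1 (v.2.trans w.2.symm)]
  by_cases h : v = w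
  · subst h
    simp
  · have h' : v.1 ≠ w.1 := fun hh => h (Subtype.ext hh)
    have h'' : w ≠ v := fun hh => h hh.symm
    simp [h', h'']

/-- For a connected deformation graph of rank `r > 0` and a field `F` whose
characteristic is `0` or a prime not dividing `r`, the associated chain and cochain
complexes over `F` are exact for every gradation `f`. -/
theorem homology_vanishes_over_field
    {V : Type*} [Fintype V] [DecidableEq V] (G : SimpleGraph V) (ν : V → V → ℤ)
    (hcon : IsConnection G ν) (hdef : IsDeformable G ν) (hconn : G.Connected)
    (r : ℕ) (hr : 0 < r) (hrank : ∀ v : V, (∑ w : V, ν w v ^ 2) = (r : ℤ))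
    (F : Type*) [Field F]
    (hchar : ringChar F = 0 ∨ (Nat.Prime (ringChar F) ∧ ¬ ringChar F ∣ r))
    (f : V → ℤ) (hf : IsGradation G f) :
    (∀ k : ℤ, Subsingleton (HkF F f ν k)) ∧ (∀ k : ℤ, Subsingleton (coHkF F f ν k)) := by
  have hrF : (r : F) ≠ 0 := by
    intro h
    have hd : ringChar F ∣ r := (ringChar.spec F r).mp h
    rcases hchar with h0 | ⟨_, hnd⟩
    · rw [h0] at hd
      exact hr.ne' (zero_dvd_iff.mp hd)
    · exact hnd hd
  have key := dg_key G ν hcon hdef hconn r hrank F f hf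
  constructor
  · intro k
    rw [Submodule.Quotient.subsingleton_iff, Submodule.eq_top_iff']
    rintro ⟨x, hx⟩
    simp only [Submodule.mem_comap, Submodule.coe_subtype, LinearMap.mem_range]
    have := congrArg (fun L => L x) (key k)
    simp only [LinearMap.add_apply, LinearMap.comp_apply, LinearMap.smul_apply,
      LinearMap.id_apply] at this
    rw [LinearMap.mem_ker.mp hx, map_zero, zero_add] at this
    refine ⟨(r : F)⁻¹ • dmapF F f ν k (k + 1) x, ?_⟩
    rw [map_smul, this, smul_smul, inv_mul_cancel₀ hrF, one_smul]
  · intro k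
    rw [Submodule.Quotient.subsingleton_iff, Submodule.eq_top_iff']
    rintro ⟨x, hx⟩
    simp only [Submodule.mem_comap, Submodule.coe_subtype, LinearMap.mem_range]
    have := congrArg (fun L => L x) (key k)
    simp only [LinearMap.add_apply, LinearMap.comp_apply, LinearMap.smul_apply,
      LinearMap.id_apply] at this
    rw [LinearMap.mem_ker.mp hx, map_zero, add_zero] at this
    refine ⟨(r : F)⁻¹ • dmapF F f ν k (k - 1) x, ?_⟩
    rw [map_smul, this, smul_smul, inv_mul_cancel₀ hrF, one_smul]
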